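/- Let T > 0, let W : [0,T] → ℝ be continuous, and let g : [0,T] → ℂ be differentiable with g′(t) = 2/(g(t) − W(t)) for every t ∈ [0,T], and set ε := inf{ |g(t) − W(t)| : t ∈ [0,T] }, assumed to be positive. Then there exists δ > 0 such that for every continuous W̃ : [0,T] → ℝ with sup{ |W̃(t) − W(t)| : t ∈ [0,T] } ≤ δ, there exists a differentiable g̃ : [0,T] → ℂ with g̃(0) = g(0), g̃′(t) = 2/(g̃(t) − W̃(t)) for every t ∈ [0,T], and satisfying |g̃(t) − W̃(t)| ≥ ε/2 and |g̃(t) − g(t)| ≤ ε/2 for every t ∈ [0,T]. (Solutions of Loewner's equation depend continuously on the driving function: a point whose trajectory stays at distance ε from the driver survives under any sufficiently small uniform perturbation of the driver.) -/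

import Mathlib

open Complex Set

/-- Truncated Loewner vector field: equals `2 / w` when `|w| ≥ r`, globally Lipschitz. -/
noncomputable def psiAux (r : ℝ) (w : ℂ) : ℂ :=
  ((max (‖w‖) r) ^ 2)⁻¹ • (2 * (starRingEnd ℂ) w)

lemma psiAux_eq {r : ℝ} (hr : 0 < r) {w : ℂ} (hw : r ≤ ‖w‖) :
    psiAux r w = 2 / w := by
  have hw0 : w ≠ 0 := by
    intro h; rw [h] at hw; simp at hw; linarith
  rw [psiAux, max_eq_left hw, Complex.real_smul, eq_div_iff hw0]
  have hpos : 0 < ‖w‖ := lt_of_lt_of_le hr hw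
  have hcne : ((‖w‖ : ℝ) : ℂ) ≠ 0 := by exact_mod_cast (ne_of_gt hpos)
  calc (↑(‖w‖ ^ 2)⁻¹ * (2 * (starRingEnd ℂ) w)) * w
      = (↑(‖w‖ ^ 2) : ℂ)⁻¹ * 2 * (w * (starRingEnd ℂ) w) := by push_cast; ring
    _ = (↑(‖w‖ ^ 2) : ℂ)⁻¹ * 2 * ↑(Complex.normSq w) := by rw [Complex.mul_conj]
    _ = 2 := by
        rw [Complex.normSq_eq_norm_sq]
        push_cast
        rw [mul_right_comm, inv_mul_cancel₀ (pow_ne_zero 2 hcne), one_mul]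

lemma psiAux_norm {r : ℝ} (hr : 0 < r) (w : ℂ) : ‖psiAux r w‖ ≤ 2 / r := by
  set A := max (‖w‖) r with hA
  have hrA : r ≤ A := le_max_right _ _
  have hwA : ‖w‖ ≤ A := le_max_left _ _
  have hApos : 0 < A := lt_of_lt_of_le hr hrA
  rw [psiAux, norm_smul, Real.norm_eq_abs, abs_of_pos (by positivity), norm_mul,
    Complex.norm_two, Complex.norm_conj]
  calc (A ^ 2)⁻¹ * (2 * ‖w‖) ≤ (A ^ 2)⁻¹ * (2 * A) := by gcongr
    _ = 2 / A := by field_simp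
    _ ≤ 2 / r := by gcongr

lemma psiAux_lip {r : ℝ} (hr : 0 < r) (w v : ℂ) :
    dist (psiAux r w) (psiAux r v) ≤ 6 / r ^ 2 * dist w v := by
  set A := max (‖w‖) r with hA
  set B := max (‖v‖) r with hB
  have hrA : r ≤ A := le_max_right _ _
  have hrB : r ≤ B := le_max_right _ _
  have hwA : ‖w‖ ≤ A := le_max_left _ _
  have hvB : ‖v‖ ≤ B := le_max_left _ _
  have hApos : 0 < A := lt_of_lt_of_le hr hrA
  have hBpos : 0 < B := lt_of_lt_of_le hr hrB
  set d := ‖w - v‖ with hd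
  have hd0 : 0 ≤ d := norm_nonneg _
  have hAB : |A - B| ≤ d := by
    calc |A - B| ≤ |‖w‖ - ‖v‖| := abs_max_sub_max_le_abs _ _ _
      _ ≤ d := abs_norm_sub_norm_le w v
  have hdecomp : psiAux r w - psiAux r v =
      (A ^ 2)⁻¹ • (2 * (starRingEnd ℂ) (w - v)) +
        ((A ^ 2)⁻¹ - (B ^ 2)⁻¹) • (2 * (starRingEnd ℂ) v) := by
    rw [psiAux, psiAux, ← hA, ← hB, map_sub, mul_sub]
    module
  rw [dist_eq_norm, hdecomp, dist_eq_norm w v]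
  have hn1 : ‖(A ^ 2)⁻¹ • (2 * (starRingEnd ℂ) (w - v))‖ = (A ^ 2)⁻¹ * (2 * d) := by
    rw [norm_smul, Real.norm_eq_abs, abs_of_pos (by positivity), norm_mul,
      Complex.norm_two, Complex.norm_conj]
  have hn2 : ‖((A ^ 2)⁻¹ - (B ^ 2)⁻¹) • (2 * (starRingEnd ℂ) v)‖ =
      |(A ^ 2)⁻¹ - (B ^ 2)⁻¹| * (2 * ‖v‖) := by
    rw [norm_smul, Real.norm_eq_abs, norm_mul,
      Complex.norm_two, Complex.norm_conj]
  have habs : |(A ^ 2)⁻¹ - (B ^ 2)⁻¹| ≤ d * (B + A) / (A ^ 2 * B ^ 2) := by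
    have h2 : (A ^ 2)⁻¹ - (B ^ 2)⁻¹ = ((B - A) * (B + A)) / (A ^ 2 * B ^ 2) := by
      field_simp; ring
    rw [h2, abs_div, abs_mul, abs_of_pos (by positivity : (0:ℝ) < A ^ 2 * B ^ 2),
      abs_of_pos (by positivity : (0:ℝ) < B + A)]
    gcongr
    rw [abs_sub_comm]; exact hAB
  calc ‖(A ^ 2)⁻¹ • (2 * (starRingEnd ℂ) (w - v)) +
        ((A ^ 2)⁻¹ - (B ^ 2)⁻¹) • (2 * (starRingEnd ℂ) v)‖
      ≤ (A ^ 2)⁻¹ * (2 * d) + |(A ^ 2)⁻¹ - (B ^ 2)⁻¹| * (2 * ‖v‖) := by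
        rw [← hn1, ← hn2]; exact norm_add_le _ _
    _ ≤ (A ^ 2)⁻¹ * (2 * d) + (d * (B + A) / (A ^ 2 * B ^ 2)) * (2 * B) := by
        gcongr
    _ ≤ 6 / r ^ 2 * d := by
        have e1 : (A ^ 2)⁻¹ * (2 * d) = 2 * d / A ^ 2 := by ring
        have key1 : 2 * d / A ^ 2 ≤ 2 * d / r ^ 2 := by
          gcongr
        have e2 : d * (B + A) / (A ^ 2 * B ^ 2) * (2 * B) = 2 * d * (B + A) / (A ^ 2 * B) := by
          field_simp
        have key2 : 2 * d * (B + A) / (A ^ 2 * B) ≤ 4 * d / r ^ 2 := by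
          rw [div_le_div_iff₀ (by positivity) (by positivity)]
          nlinarith [mul_le_mul_of_nonneg_left (mul_le_mul hrA hrA hr.le hApos.le)
              (mul_nonneg hd0 hBpos.le),
            mul_le_mul_of_nonneg_left (mul_le_mul hrA hrB hr.le hApos.le)
              (mul_nonneg hd0 hApos.le)]
        have e3 : 2 * d / r ^ 2 + 4 * d / r ^ 2 = 6 / r ^ 2 * d := by ring
        linarith

lemma psiAux_continuous {r : ℝ} (hr : 0 < r) : Continuous (psiAux r) := by
  refine Continuous.smul (f := fun w => ((max ‖w‖ r) ^ 2)⁻¹)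
    (g := fun w => 2 * (starRingEnd ℂ) w) ?_ ?_
  · exact (((continuous_norm.max continuous_const).pow 2).inv₀
      (fun w => (pow_pos (lt_of_lt_of_le hr (le_max_right _ _)) 2).ne'))
  · exact continuous_const.mul (Complex.continuous_conj)

/-- continuous dependence of Loewner's equation on the driver: if `g` solves
Loewner's chordal equation on `[0,T]` driven by a continuous `W` and
`ε := inf{|g(t) - W(t)| : t ∈ [0,T]} > 0`, then there is `δ > 0` such that any continuous
driver `W̃` with `sup_{[0,T]} |W̃ - W| ≤ δ` admits a solution `g̃` of Loewner's equation with
`g̃(0) = g(0)`, `|g̃(t) - W̃(t)| ≥ ε/2` and `|g̃(t) - g(t)| ≤ ε/2` for all `t ∈ [0,T]`. -/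
theorem loewner_continuous_dependence_on_driver (T : ℝ) (hT : 0 < T)
    (W : ℝ → ℝ) (hW : ContinuousOn W (Set.Icc (0 : ℝ) T))
    (g : ℝ → ℂ)
    (hg : ∀ t ∈ Set.Icc (0 : ℝ) T,
      HasDerivWithinAt g (2 / (g t - (W t : ℂ))) (Set.Icc (0 : ℝ) T) t)
    (ε : ℝ)
    (hε : ε = sInf ((fun t => ‖g t - (W t : ℂ)‖) '' Set.Icc (0 : ℝ) T))
    (hεpos : 0 < ε) :
    ∃ δ > (0 : ℝ), ∀ Wt : ℝ → ℝ, ContinuousOn Wt (Set.Icc (0 : ℝ) T) →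
      (∀ t ∈ Set.Icc (0 : ℝ) T, |Wt t - W t| ≤ δ) →
      ∃ gt : ℝ → ℂ, gt 0 = g 0 ∧
        (∀ t ∈ Set.Icc (0 : ℝ) T,
          HasDerivWithinAt gt (2 / (gt t - (Wt t : ℂ))) (Set.Icc (0 : ℝ) T) t) ∧
        (∀ t ∈ Set.Icc (0 : ℝ) T,
          ε / 2 ≤ ‖gt t - (Wt t : ℂ)‖ ∧
            ‖gt t - g t‖ ≤ ε / 2) := by
  have hεle : ∀ t ∈ Set.Icc (0 : ℝ) T, ε ≤ ‖g t - (W t : ℂ)‖ := by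
    intro t ht
    rw [hε]
    refine csInf_le ⟨0, ?_⟩ (mem_image_of_mem _ ht)
    rintro x ⟨s, hs, rfl⟩
    exact norm_nonneg _
  have hr : (0 : ℝ) < ε / 2 := by linarith
  set Kr : ℝ := 6 / (ε / 2) ^ 2 with hKr
  have hKrpos : 0 < Kr := by positivity
  set K : NNReal := Real.toNNReal Kr with hK
  have hKc : (K : ℝ) = Kr := Real.coe_toNNReal _ hKrpos.le
  set δ : ℝ := ε / 4 / Real.exp (Kr * T) with hδ
  have hδpos : 0 < δ := by positivity
  refine ⟨δ, hδpos, ?_⟩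
  intro Wt hWtc hWtδ
  have hδε4 : δ ≤ ε / 4 := div_le_self (by linarith) (Real.one_le_exp (by positivity))
  have lipW : ∀ c : ℝ, LipschitzWith K (fun z : ℂ => psiAux (ε / 2) (z - (c : ℂ))) := by
    intro c
    apply LipschitzWith.of_dist_le_mul
    intro z z'
    rw [hKc]
    calc dist (psiAux (ε / 2) (z - (c : ℂ))) (psiAux (ε / 2) (z' - (c : ℂ)))
        ≤ 6 / (ε / 2) ^ 2 * dist (z - (c : ℂ)) (z' - (c : ℂ)) := psiAux_lip hr _ _
      _ = Kr * dist z z' := by rw [dist_sub_right, hKr]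
  set L : NNReal := Real.toNNReal (2 / (ε / 2)) with hL
  have hLc : (L : ℝ) = 2 / (ε / 2) := Real.coe_toNNReal _ (by positivity)
  have hPL : IsPicardLindelof (fun t z => psiAux (ε / 2) (z - (Wt t : ℂ))) (tmin := 0) (tmax := T)
      ⟨0, ⟨le_refl 0, hT.le⟩⟩ (g 0) (L * T.toNNReal) 0 L K := by
    constructor
    · exact fun t _ => (lipW (Wt t)).lipschitzOnWith
    · intro x _
      exact (psiAux_continuous hr).comp_continuousOn
        (continuousOn_const.sub (Complex.continuous_ofReal.comp_continuousOn hWtc))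
    · intro t _ x _
      rw [hLc]
      exact psiAux_norm hr _
    · simp [Real.coe_toNNReal _ hT.le, hT.le]
  obtain ⟨gt, hgt0, hgtd⟩ : ∃ α : ℝ → ℂ, α 0 = g 0 ∧ ∀ t ∈ Set.Icc (0 : ℝ) T,
      HasDerivWithinAt α (psiAux (ε / 2) (α t - (Wt t : ℂ))) (Set.Icc (0 : ℝ) T) t :=
    hPL.exists_eq_forall_mem_Icc_hasDerivWithinAt₀
  have hgtc : ContinuousOn gt (Set.Icc 0 T) := fun t ht => (hgtd t ht).continuousWithinAt
  have hgc : ContinuousOn g (Set.Icc 0 T) := fun t ht => (hg t ht).continuousWithinAt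
  have hgtd' : ∀ t ∈ Set.Ico (0 : ℝ) T,
      HasDerivWithinAt gt (psiAux (ε / 2) (gt t - (Wt t : ℂ))) (Set.Ici t) t := fun t ht =>
    (hgtd t (Ico_subset_Icc_self ht)).mono_of_mem_nhdsWithin (Icc_mem_nhdsGE_of_mem ht)
  have hgd' : ∀ t ∈ Set.Ico (0 : ℝ) T,
      HasDerivWithinAt g (2 / (g t - (W t : ℂ))) (Set.Ici t) t := fun t ht =>
    (hg t (Ico_subset_Icc_self ht)).mono_of_mem_nhdsWithin (Icc_mem_nhdsGE_of_mem ht)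
  have f_bound : ∀ t ∈ Set.Ico (0 : ℝ) T,
      dist (psiAux (ε / 2) (gt t - (Wt t : ℂ))) (psiAux (ε / 2) (gt t - (W t : ℂ))) ≤ Kr * δ := by
    intro t ht
    calc dist (psiAux (ε / 2) (gt t - (Wt t : ℂ))) (psiAux (ε / 2) (gt t - (W t : ℂ)))
        ≤ 6 / (ε / 2) ^ 2 * dist (gt t - (Wt t : ℂ)) (gt t - (W t : ℂ)) := psiAux_lip hr _ _
      _ = Kr * ‖(Wt t : ℂ) - (W t : ℂ)‖ := by
          rw [dist_sub_left, Complex.dist_eq, hKr]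
      _ ≤ Kr * δ := by
          rw [← Complex.ofReal_sub, Complex.norm_real, Real.norm_eq_abs]
          exact mul_le_mul_of_nonneg_left (hWtδ t (Ico_subset_Icc_self ht)) hKrpos.le
  have g_bound : ∀ t ∈ Set.Ico (0 : ℝ) T,
      dist (2 / (g t - (W t : ℂ))) (psiAux (ε / 2) (g t - (W t : ℂ))) ≤ 0 := by
    intro t ht
    rw [psiAux_eq hr (le_trans (by linarith) (hεle t (Ico_subset_Icc_self ht))), dist_self]
  have ha : dist (gt 0) (g 0) ≤ 0 := by rw [hgt0, dist_self]
  have hgron := dist_le_of_approx_trajectories_ODE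
    (v := fun t z => psiAux (ε / 2) (z - (W t : ℂ))) (K := K)
    (fun t => lipW (W t)) hgtc hgtd' f_bound hgc hgd' g_bound ha
  have hclose : ∀ t ∈ Set.Icc (0 : ℝ) T, ‖gt t - g t‖ ≤ ε / 4 := by
    intro t ht
    have h := hgron t ht
    rw [Complex.dist_eq] at h
    refine h.trans ?_
    have hKne : (K : ℝ) ≠ 0 := by rw [hKc]; positivity
    rw [gronwallBound_of_K_ne_0 hKne]
    rw [hKc]
    simp only [zero_mul, zero_add, add_zero, sub_zero]
    have e : Kr * δ / Kr = δ := by field_simp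
    rw [e]
    have h1 : Real.exp (Kr * t) ≤ Real.exp (Kr * T) :=
      Real.exp_le_exp.2 (mul_le_mul_of_nonneg_left ht.2 hKrpos.le)
    have h2 : δ * Real.exp (Kr * T) = ε / 4 := by
      rw [hδ, div_mul_cancel₀]
      positivity
    nlinarith [Real.exp_pos (Kr * t), hδpos]
  have hfar : ∀ t ∈ Set.Icc (0 : ℝ) T, ε / 2 ≤ ‖gt t - (Wt t : ℂ)‖ := by
    intro t ht
    have h1 := hεle t ht
    have h2 := hclose t ht
    have h3 := hWtδ t ht
    have key : ‖g t - (W t : ℂ)‖ ≤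
        ‖gt t - (Wt t : ℂ)‖ + ‖gt t - g t‖ + |Wt t - W t| := by
      have hid : g t - (W t : ℂ) = (gt t - (Wt t : ℂ)) - (gt t - g t) + ((Wt t : ℂ) - (W t : ℂ)) := by
        ring
      rw [hid]
      have t1 := norm_add_le ((gt t - (Wt t : ℂ)) - (gt t - g t)) ((Wt t : ℂ) - (W t : ℂ))
      have t2 := norm_sub_le (gt t - (Wt t : ℂ)) (gt t - g t)
      have t3 : ‖((Wt t : ℂ)) - ((W t : ℂ))‖ = |Wt t - W t| := by
        rw [← Complex.ofReal_sub, Complex.norm_real, Real.norm_eq_abs]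
      linarith
    linarith
  refine ⟨gt, hgt0, ?_, fun t ht => ⟨hfar t ht, le_trans (hclose t ht) (by linarith)⟩⟩
  intro t ht
  have h := hgtd t ht
  rwa [psiAux_eq hr (hfar t ht)] at h
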